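/- Utility-invariance of the optimal support (main structural consequence): assume every event has strict overround, ∑_i π ℓ i > 1 for each ℓ, and that within each event the edge ratios are pairwise distinct (i ≠ j implies p ℓ i / π ℓ i ≠ p ℓ j / π ℓ j). Let U and V both be admissible utilities with derivatives U' and V' respectively. Suppose (c, g) is a feasible portfolio with c > 0 maximizing ∑_x Pr(x)·U(W(x)) over all feasible portfolios, and (c', g') is a feasible portfolio with c' > 0 maximizing ∑_x Pr(x)·V(W'(x)) over all feasible portfolios. Then the active supports coincide: for every event ℓ and every outcome i, g ℓ i > 0 if and only if g' ℓ i > 0. -/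

import Mathlib

open Finset

/-- Probability of a product state `x`. -/
def prodProb {m : ℕ} {n : Fin m → ℕ} (p : ∀ ℓ, Fin (n ℓ) → ℝ)
    (x : ∀ ℓ, Fin (n ℓ)) : ℝ :=
  ∏ ℓ, p ℓ (x ℓ)

/-- Terminal wealth of the portfolio `(c, g)` in product state `x`. -/
def wealth {m : ℕ} {n : Fin m → ℕ} (c : ℝ) (g : ∀ ℓ, Fin (n ℓ) → ℝ)
    (x : ∀ ℓ, Fin (n ℓ)) : ℝ :=
  c + ∑ ℓ, g ℓ (x ℓ)

/-- Probability of a reduced state `y` (a state of all events other than `ℓ`). -/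
def redProb {m : ℕ} {n : Fin m → ℕ} (p : ∀ ℓ, Fin (n ℓ) → ℝ) (ℓ : Fin m)
    (y : ∀ r : {r : Fin m // r ≠ ℓ}, Fin (n r.1)) : ℝ :=
  ∏ r, p r.1 (y r)

/-- Background wealth `R_ℓ(y)` from all events other than `ℓ`. -/
def background {m : ℕ} {n : Fin m → ℕ} (c : ℝ) (g : ∀ ℓ, Fin (n ℓ) → ℝ) (ℓ : Fin m)
    (y : ∀ r : {r : Fin m // r ≠ ℓ}, Fin (n r.1)) : ℝ :=
  c + ∑ r, g r.1 (y r)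

/-- Reduced expectation `E₋ℓ[h]` over reduced states of event `ℓ`. -/
def Eminus {m : ℕ} {n : Fin m → ℕ} (p : ∀ ℓ, Fin (n ℓ) → ℝ) (ℓ : Fin m)
    (h : (∀ r : {r : Fin m // r ≠ ℓ}, Fin (n r.1)) → ℝ) : ℝ :=
  ∑ y, redProb p ℓ y * h y

/-- Feasibility: nonnegative cash and wagers, unit budget, positive wealth in every state. -/
def Feasible {m : ℕ} {n : Fin m → ℕ} (π : ∀ ℓ, Fin (n ℓ) → ℝ)
    (c : ℝ) (g : ∀ ℓ, Fin (n ℓ) → ℝ) : Prop :=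
  0 ≤ c ∧ (∀ ℓ i, 0 ≤ g ℓ i) ∧ (c + ∑ ℓ, ∑ i, π ℓ i * g ℓ i = 1) ∧
    ∀ x, 0 < wealth c g x

/-- The wagers `g` are supported on the support family `A`. -/
def SupportedOn {m : ℕ} {n : Fin m → ℕ} (A : ∀ ℓ, Finset (Fin (n ℓ)))
    (g : ∀ ℓ, Fin (n ℓ) → ℝ) : Prop :=
  ∀ ℓ i, (i ∈ A ℓ → 0 < g ℓ i) ∧ (i ∉ A ℓ → g ℓ i = 0)

/-- `U` is an admissible utility with derivative `U'`. -/
def Admissible (U U' : ℝ → ℝ) : Prop :=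
  (∀ w : ℝ, 0 < w → HasDerivAt U (U' w) w) ∧ (∀ w : ℝ, 0 < w → 0 < U' w) ∧
    StrictAntiOn U' (Set.Ioi 0)

section Aux

section Split
variable {m : ℕ} {n : Fin m → ℕ}

def reassemble (ℓ : Fin m) (j : Fin (n ℓ))
    (y : ∀ r : {r : Fin m // r ≠ ℓ}, Fin (n r.1)) : ∀ r, Fin (n r) :=
  (Equiv.piSplitAt ℓ (fun r => Fin (n r))).symm (j, y)

lemma reassemble_self (ℓ : Fin m) (j : Fin (n ℓ)) (y) :
    reassemble ℓ j y ℓ = j := by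
  simp [reassemble, Equiv.piSplitAt]

lemma reassemble_ne (ℓ : Fin m) (j : Fin (n ℓ)) (y) (r : Fin m) (h : r ≠ ℓ) :
    reassemble ℓ j y r = y ⟨r, h⟩ := by
  simp [reassemble, Equiv.piSplitAt, h]

lemma sum_split (ℓ : Fin m) (φ : (∀ r, Fin (n r)) → ℝ) :
    ∑ x, φ x = ∑ j : Fin (n ℓ), ∑ y, φ (reassemble ℓ j y) := by
  rw [← Equiv.sum_comp (Equiv.piSplitAt ℓ (fun r => Fin (n r))).symm φ,
    Fintype.sum_prod_type]
  rfl

lemma prod_reassemble (ℓ : Fin m) (j : Fin (n ℓ)) (y) (f : ∀ r, Fin (n r) → ℝ) :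
    ∏ r, f r (reassemble ℓ j y r) = f ℓ j * ∏ r : {r : Fin m // r ≠ ℓ}, f r.1 (y r) := by
  rw [← Finset.mul_prod_erase univ _ (mem_univ ℓ), reassemble_self]
  congr 1
  rw [Finset.prod_subtype (univ.erase ℓ) (p := fun r => r ≠ ℓ)
    (fun r => by simp [Finset.mem_erase])]
  exact Finset.prod_congr rfl (fun r _ => by rw [reassemble_ne ℓ j y r.1 r.2])

lemma sum_reassemble (ℓ : Fin m) (j : Fin (n ℓ)) (y) (f : ∀ r, Fin (n r) → ℝ) :
    ∑ r, f r (reassemble ℓ j y r) = f ℓ j + ∑ r : {r : Fin m // r ≠ ℓ}, f r.1 (y r) := by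
  rw [← Finset.add_sum_erase univ _ (mem_univ ℓ), reassemble_self]
  congr 1
  rw [Finset.sum_subtype (univ.erase ℓ) (p := fun r => r ≠ ℓ)
    (fun r => by simp [Finset.mem_erase])]
  exact Finset.sum_congr rfl (fun r _ => by rw [reassemble_ne ℓ j y r.1 r.2])

lemma prodProb_reassemble (p : ∀ ℓ, Fin (n ℓ) → ℝ) (ℓ : Fin m) (j : Fin (n ℓ)) (y) :
    prodProb p (reassemble ℓ j y) = p ℓ j * redProb p ℓ y :=
  prod_reassemble ℓ j y p

lemma wealth_reassemble (c : ℝ) (g : ∀ ℓ, Fin (n ℓ) → ℝ) (ℓ : Fin m) (j : Fin (n ℓ)) (y) :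
    wealth c g (reassemble ℓ j y) = background c g ℓ y + g ℓ j := by
  unfold wealth background
  rw [sum_reassemble]
  ring

end Split

lemma deriv_nonpos_of_right_max {f : ℝ → ℝ} {D ε : ℝ} (hf : HasDerivAt f D 0)
    (hε : 0 < ε) (h : ∀ t : ℝ, 0 ≤ t → t < ε → f t ≤ f 0) : D ≤ 0 := by
  by_contra hD
  push_neg at hD
  have hs : Filter.Tendsto (slope f 0) (nhdsWithin 0 {(0:ℝ)}ᶜ) (nhds D) :=
    hasDerivAt_iff_tendsto_slope.mp hf
  have hs' : Filter.Tendsto (slope f 0) (nhdsWithin 0 (Set.Ioi 0)) (nhds D) :=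
    hs.mono_left (nhdsWithin_mono 0 (fun t ht => ne_of_gt ht))
  have h1 : ∀ᶠ t in nhdsWithin (0:ℝ) (Set.Ioi 0), 0 < slope f 0 t :=
    hs'.eventually (eventually_gt_nhds hD)
  have h2 : ∀ᶠ t in nhdsWithin (0:ℝ) (Set.Ioi 0), t ∈ Set.Ioo (0:ℝ) ε :=
    Filter.eventually_of_mem (Ioo_mem_nhdsGT_of_mem ⟨le_refl 0, hε⟩) (fun t ht => ht)
  obtain ⟨t, ht1, ht2⟩ := (h1.and h2).exists
  have hslope : slope f 0 t = (f t - f 0) / t := by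
    rw [slope_def_field]
    simp [div_eq_div_iff]
  rw [hslope] at ht1
  have hft : f 0 < f t := by
    rcases (div_pos_iff).mp ht1 with ⟨ha, _⟩ | ⟨_, hb⟩
    · linarith
    · linarith [ht2.1]
  exact absurd (h t (le_of_lt ht2.1) ht2.2) (not_le.mpr hft)

/-- Characterization of the optimal support in event `ℓ`. -/
lemma optimal_char {m : ℕ} {n : Fin m → ℕ}
    (p π : ∀ ℓ, Fin (n ℓ) → ℝ)
    (hp : ∀ ℓ i, 0 < p ℓ i) (hpsum : ∀ ℓ, ∑ i, p ℓ i = 1)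
    (hπ : ∀ ℓ i, 0 < π ℓ i)
    (hover : ∀ ℓ, 1 < ∑ i, π ℓ i)
    (U Uder : ℝ → ℝ) (hU : Admissible U Uder)
    (c : ℝ) (g : ∀ ℓ, Fin (n ℓ) → ℝ)
    (hfeas : Feasible π c g) (hc : 0 < c)
    (hopt : ∀ c₁ : ℝ, ∀ g₁ : ∀ ℓ, Fin (n ℓ) → ℝ, Feasible π c₁ g₁ →
      ∑ x, prodProb p x * U (wealth c₁ g₁ x) ≤ ∑ x, prodProb p x * U (wealth c g x))
    (ℓ : Fin m) :
    ∃ A : Finset (Fin (n ℓ)), (∀ i, i ∈ A ↔ 0 < g ℓ i) ∧ (∑ i ∈ A, π ℓ i < 1) ∧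
      (∀ i, i ∈ A ↔ (1 - ∑ j ∈ A, p ℓ j) * π ℓ i < (1 - ∑ j ∈ A, π ℓ j) * p ℓ i) := by
  classical
  -- every event has at least one outcome
  have hn : ∀ r, 0 < n r := by
    intro r
    rcases Nat.eq_zero_or_pos (n r) with h | h
    · exfalso
      have h2 := hover r
      haveI : IsEmpty (Fin (n r)) := by rw [h]; infer_instance
      rw [Finset.univ_eq_empty, Finset.sum_empty] at h2
      linarith
    · exact h
  haveI hne1 : Nonempty (∀ r, Fin (n r)) := ⟨fun r => ⟨0, hn r⟩⟩
  haveI hne2 : Nonempty (∀ r : {r : Fin m // r ≠ ℓ}, Fin (n r.1)) := ⟨fun r => ⟨0, hn r.1⟩⟩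
  obtain ⟨hc0, hg0, hbudget, hW⟩ := hfeas
  have hprodpos : ∀ x, 0 < prodProb p x := fun x =>
    Finset.prod_pos (fun r _ => hp r (x r))
  have hredpos : ∀ y, 0 < redProb p ℓ y := fun y =>
    Finset.prod_pos (fun r _ => hp r.1 (y r))
  have hbg : ∀ y, 0 < background c g ℓ y := by
    intro y
    have : 0 ≤ ∑ r : {r : Fin m // r ≠ ℓ}, g r.1 (y r) :=
      Finset.sum_nonneg (fun r _ => hg0 r.1 (y r))
    unfold background
    linarith
  set lam : ℝ := ∑ x, prodProb p x * Uder (wealth c g x) with hlam_def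
  set H : ℝ → ℝ := fun a => ∑ y, redProb p ℓ y * Uder (background c g ℓ y + a) with hH_def
  have hlam : 0 < lam := by
    apply Finset.sum_pos _ Finset.univ_nonempty
    intro x _
    exact mul_pos (hprodpos x) (hU.2.1 _ (hW x))
  have hHpos : ∀ a, 0 ≤ a → 0 < H a := by
    intro a ha
    apply Finset.sum_pos _ Finset.univ_nonempty
    intro y _
    exact mul_pos (hredpos y) (hU.2.1 _ (by linarith [hbg y]))
  have hHanti : ∀ a b : ℝ, 0 ≤ a → a < b → H b < H a := by
    intro a b ha hab
    apply Finset.sum_lt_sum_of_nonempty Finset.univ_nonempty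
    intro y _
    apply mul_lt_mul_of_pos_left _ (hredpos y)
    exact hU.2.2 (Set.mem_Ioi.mpr (by linarith [hbg y])) (Set.mem_Ioi.mpr (by linarith [hbg y]))
      (by linarith)
  -- split lam over event ℓ
  have hlamsplit : lam = ∑ j, p ℓ j * H (g ℓ j) := by
    rw [hlam_def, sum_split ℓ]
    apply Finset.sum_congr rfl
    intro j _
    rw [hH_def, Finset.mul_sum]
    apply Finset.sum_congr rfl
    intro y _
    rw [prodProb_reassemble, wealth_reassemble]
    ring
  -- KKT conditions
  have kkt : ∀ i, p ℓ i * H (g ℓ i) ≤ π ℓ i * lam ∧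
      (0 < g ℓ i → p ℓ i * H (g ℓ i) = π ℓ i * lam) := by
    intro i
    set e : (∀ r, Fin (n r)) → ℝ :=
      fun x => (if x ℓ = i then (1:ℝ) else 0) - π ℓ i with he_def
    set ψ : ℝ → ℝ := fun t => ∑ x, prodProb p x * U (wealth c g x + t * e x) with hψ_def
    set gl : ℝ → Fin (n ℓ) → ℝ :=
      fun t j => g ℓ j + t * (if j = i then 1 else 0) with hgl_def
    set gt : ℝ → ∀ r, Fin (n r) → ℝ := fun t => Function.update g ℓ (gl t) with hgt_def
    set ct : ℝ → ℝ := fun t => c - π ℓ i * t with hct_def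
    -- wealth of the perturbed portfolio
    have hwt : ∀ t x, wealth (ct t) (gt t) x = wealth c g x + t * e x := by
      intro t x
      unfold wealth
      rw [← Finset.add_sum_erase univ (fun r => gt t r (x r)) (mem_univ ℓ),
        ← Finset.add_sum_erase univ (fun r => g r (x r)) (mem_univ ℓ)]
      have h1 : gt t ℓ (x ℓ) = gl t (x ℓ) := by simp only [hgt_def]; rw [Function.update_self]
      have h2 : ∀ r ∈ univ.erase ℓ, gt t r (x r) = g r (x r) := by
        intro r hr
        simp only [hgt_def]; rw [Function.update_of_ne (Finset.mem_erase.mp hr).1]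
      rw [Finset.sum_congr rfl h2, h1, hgl_def, hct_def, he_def]
      ring
    -- budget of the perturbed portfolio
    have hbt : ∀ t, ct t + ∑ r, ∑ j, π r j * gt t r j = 1 := by
      intro t
      rw [← Finset.add_sum_erase univ (fun r => ∑ j, π r j * gt t r j) (mem_univ ℓ)]
      have h2 : ∀ r ∈ univ.erase ℓ, ∑ j, π r j * gt t r j = ∑ j, π r j * g r j := by
        intro r hr
        simp only [hgt_def]; rw [Function.update_of_ne (Finset.mem_erase.mp hr).1]
      have h1 : ∑ j, π ℓ j * gt t ℓ j = (∑ j, π ℓ j * g ℓ j) + t * π ℓ i := by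
        simp only [hgt_def]; rw [Function.update_self]; simp only [hgl_def]
        have h3 : ∀ j, π ℓ j * (g ℓ j + t * (if j = i then (1:ℝ) else 0)) =
            π ℓ j * g ℓ j + (if j = i then t * π ℓ j else 0) := by
          intro j
          by_cases h : j = i <;> simp [h] <;> ring
        rw [Finset.sum_congr rfl (fun j _ => h3 j), Finset.sum_add_distrib,
          Finset.sum_ite_eq' univ i (fun j => t * π ℓ j)]
        simp
      rw [Finset.sum_congr rfl h2, h1]
      simp only [hct_def]
      have := hbudget
      rw [← Finset.add_sum_erase univ (fun r => ∑ j, π r j * g r j) (mem_univ ℓ)] at this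
      linarith
    -- choice of ε
    set Wmin : ℝ := univ.inf' Finset.univ_nonempty (wealth c g) with hWmin_def
    have hWmin : 0 < Wmin := by
      rw [hWmin_def, Finset.lt_inf'_iff]
      exact fun x _ => hW x
    have hWminle : ∀ x, Wmin ≤ wealth c g x := fun x =>
      Finset.inf'_le _ (mem_univ x)
    set K : ℝ := 1 + π ℓ i with hK_def
    have hK : 0 < K := by have := hπ ℓ i; rw [hK_def]; linarith
    have heb : ∀ x, |e x| ≤ K := by
      intro x
      simp only [he_def, hK_def]
      have := hπ ℓ i
      rw [abs_le]
      by_cases h : x ℓ = i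
      · rw [if_pos h]
        constructor <;> linarith
      · rw [if_neg h]
        constructor <;> linarith
    set ε : ℝ := min (c / K) (Wmin / (2 * K)) with hε_def
    have hε : 0 < ε := by
      apply lt_min (div_pos hc hK) (div_pos hWmin (by linarith))
    -- feasibility of the perturbed portfolio
    have hfeast : ∀ t : ℝ, |t| ≤ ε → 0 ≤ g ℓ i + t → Feasible π (ct t) (gt t) := by
      intro t ht hgi
      have htc : |t| ≤ c / K := le_trans ht (min_le_left _ _)
      have htW : |t| ≤ Wmin / (2 * K) := le_trans ht (min_le_right _ _)
      refine ⟨?_, ?_, hbt t, ?_⟩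
      · -- cash nonneg
        have h1 : π ℓ i * t ≤ π ℓ i * |t| :=
          mul_le_mul_of_nonneg_left (le_abs_self t) (le_of_lt (hπ ℓ i))
        have h2 : π ℓ i * |t| ≤ K * (c / K) :=
          mul_le_mul (by rw [hK_def]; linarith) htc (abs_nonneg t) (le_of_lt hK)
        rw [mul_div_cancel₀ c (ne_of_gt hK)] at h2
        simp only [hct_def]
        linarith
      · -- wagers nonneg
        intro r j
        by_cases hr : r = ℓ
        · subst hr
          simp only [hgt_def]; rw [Function.update_self]; simp only [hgl_def]
          by_cases hj : j = i
          · subst hj; simpa using hgi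
          · simp [hj, hg0 r j]
        · simp only [hgt_def]; rw [Function.update_of_ne hr]
          exact hg0 r j
      · -- wealth positive
        intro x
        rw [hwt t x]
        have hb1 : |t * e x| ≤ Wmin / 2 := by
          rw [abs_mul]
          have hKK : (0:ℝ) ≤ Wmin / (2 * K) := by positivity
          have hmm := mul_le_mul htW (heb x) (abs_nonneg _) hKK
          have heq2 : Wmin / (2 * K) * K = Wmin / 2 := by
            field_simp
          linarith
        have hb2 := neg_abs_le (t * e x)
        have hb3 := hWminle x
        linarith
    -- the objective along the perturbation
    have hψle : ∀ t : ℝ, |t| ≤ ε → 0 ≤ g ℓ i + t → ψ t ≤ ψ 0 := by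
      intro t ht hgi
      have hfe := hfeast t ht hgi
      have h1 := hopt (ct t) (gt t) hfe
      have h2 : ∑ x, prodProb p x * U (wealth (ct t) (gt t) x) = ψ t := by
        rw [hψ_def]
        exact Finset.sum_congr rfl (fun x _ => by rw [hwt t x])
      have h3 : ∑ x, prodProb p x * U (wealth c g x) = ψ 0 := by
        rw [hψ_def]
        exact Finset.sum_congr rfl (fun x _ => by norm_num)
      rw [h2, h3] at h1
      exact h1
    -- derivative of ψ at 0
    set D : ℝ := ∑ x, prodProb p x * (Uder (wealth c g x) * e x) with hD_def
    have hDer : HasDerivAt ψ D 0 := by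
      rw [hψ_def, hD_def]
      apply HasDerivAt.fun_sum
      intro x _
      have h1 : HasDerivAt (fun t : ℝ => wealth c g x + t * e x) (e x) 0 := by
        simpa using ((hasDerivAt_id (0:ℝ)).mul_const (e x)).const_add (wealth c g x)
      have h0 : HasDerivAt U (Uder (wealth c g x))
          ((fun t : ℝ => wealth c g x + t * e x) 0) := by
        simpa using hU.1 (wealth c g x) (hW x)
      have h2 := (h0.comp 0 h1).const_mul (prodProb p x)
      simpa using h2
    -- value of D
    have hT : ∑ x, prodProb p x * Uder (wealth c g x) * (if x ℓ = i then (1:ℝ) else 0)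
        = p ℓ i * H (g ℓ i) := by
      rw [sum_split ℓ]
      have hterm : ∀ j : Fin (n ℓ), (∑ y, prodProb p (reassemble ℓ j y)
          * Uder (wealth c g (reassemble ℓ j y))
          * (if reassemble ℓ j y ℓ = i then (1:ℝ) else 0))
          = if j = i then p ℓ j * H (g ℓ j) else 0 := by
        intro j
        by_cases h : j = i
        · rw [if_pos h, hH_def, Finset.mul_sum]
          apply Finset.sum_congr rfl
          intro y _
          rw [prodProb_reassemble, wealth_reassemble, reassemble_self, if_pos h]
          ring
        · rw [if_neg h]
          apply Finset.sum_eq_zero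
          intro y _
          rw [reassemble_self, if_neg h]
          ring
      rw [Finset.sum_congr rfl (fun j _ => hterm j),
        Finset.sum_ite_eq' univ i (fun j => p ℓ j * H (g ℓ j)), if_pos (mem_univ i)]
    have hDval : D = p ℓ i * H (g ℓ i) - π ℓ i * lam := by
      rw [hD_def, hlam_def]
      have h1 : ∀ x, prodProb p x * (Uder (wealth c g x) * e x) =
          prodProb p x * Uder (wealth c g x) * (if x ℓ = i then (1:ℝ) else 0)
          - π ℓ i * (prodProb p x * Uder (wealth c g x)) := by
        intro x
        rw [he_def]
        ring
      rw [Finset.sum_congr rfl (fun x _ => h1 x), Finset.sum_sub_distrib,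
        ← Finset.mul_sum, hT]
    -- D ≤ 0
    have hDle : D ≤ 0 := by
      apply deriv_nonpos_of_right_max hDer hε
      intro t ht0 htε
      apply hψle t (by rw [abs_of_nonneg ht0]; exact le_of_lt htε)
      have := hg0 ℓ i
      linarith
    constructor
    · linarith [hDval, hDle]
    · intro hgi
      -- two-sided local max at 0
      have hD0 : D = 0 := by
        apply IsLocalMax.hasDerivAt_eq_zero _ hDer
        set ε' : ℝ := min ε (g ℓ i) with hε'_def
        have hε' : 0 < ε' := lt_min hε hgi
        have hmem : Set.Ioo (-ε') ε' ∈ nhds (0:ℝ) := Ioo_mem_nhds (by linarith) hε'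
        apply Filter.eventually_of_mem hmem
        intro t ht
        obtain ⟨ht1, ht2⟩ := ht
        apply hψle t
        · rw [abs_le]
          constructor
          · have := min_le_left ε (g ℓ i); linarith
          · have := min_le_left ε (g ℓ i); linarith
        · have := min_le_right ε (g ℓ i); linarith
      linarith [hDval, hD0]
  -- assemble the support characterization
  set A : Finset (Fin (n ℓ)) := univ.filter (fun i => 0 < g ℓ i) with hA_def
  have hgA : ∀ i, i ∈ A ↔ 0 < g ℓ i := by
    intro i; rw [hA_def]; simp
  have hgA0 : ∀ i, i ∉ A → g ℓ i = 0 := by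
    intro i hi
    rw [hgA] at hi
    push_neg at hi
    exact le_antisymm hi (hg0 ℓ i)
  set PA : ℝ := ∑ j ∈ A, p ℓ j with hPA_def
  set QA : ℝ := ∑ j ∈ A, π ℓ j with hQA_def
  -- the key identity lam * (1 - QA) = (1 - PA) * H 0
  have hkey : lam * (1 - QA) = (1 - PA) * H 0 := by
    have hsplit2 : lam = ∑ j ∈ A, p ℓ j * H (g ℓ j) + ∑ j ∈ univ \ A, p ℓ j * H (g ℓ j) :=
      by rw [hlamsplit, ← Finset.sum_sdiff (Finset.subset_univ A)]; ring
    have h1 : ∑ j ∈ A, p ℓ j * H (g ℓ j) = QA * lam := by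
      rw [hQA_def, Finset.sum_mul]
      exact Finset.sum_congr rfl (fun j hj => (kkt j).2 ((hgA j).mp hj))
    have h2 : ∑ j ∈ univ \ A, p ℓ j * H (g ℓ j) = (1 - PA) * H 0 := by
      have h3 : ∀ j ∈ univ \ A, p ℓ j * H (g ℓ j) = p ℓ j * H 0 := by
        intro j hj
        rw [hgA0 j (Finset.mem_sdiff.mp hj).2]
      rw [Finset.sum_congr rfl h3, ← Finset.sum_mul]
      congr 1
      have := Finset.sum_sdiff (Finset.subset_univ A) (f := fun j => p ℓ j)
      rw [hpsum ℓ] at this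
      rw [hPA_def]
      linarith
    have h0 := hsplit2
    rw [h1, h2] at h0
    linear_combination h0
  have hH0 : 0 < H 0 := hHpos 0 le_rfl
  -- 1 - PA > 0
  have hPA1 : 0 < 1 - PA := by
    have hPAle : PA ≤ 1 := by
      rw [hPA_def, ← hpsum ℓ]
      exact Finset.sum_le_sum_of_subset_of_nonneg (Finset.subset_univ A)
        (fun j _ _ => le_of_lt (hp ℓ j))
    rcases lt_or_eq_of_le hPAle with h | h
    · linarith
    exfalso
    have hAuniv : A = univ := by
      by_contra hAne
      have hex : ∃ j, j ∉ A := by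
        by_contra hall
        push_neg at hall
        exact hAne (Finset.eq_univ_iff_forall.mpr hall)
      obtain ⟨j, hj⟩ := hex
      have hsumlt : PA < 1 := by
        rw [hPA_def, ← hpsum ℓ]
        exact Finset.sum_lt_sum_of_subset (Finset.subset_univ A) (mem_univ j) hj (hp ℓ j)
          (fun k _ _ => le_of_lt (hp ℓ k))
      linarith
    have hQA1 : QA = ∑ i, π ℓ i := by rw [hQA_def, hAuniv]
    have h2 := hover ℓ
    have h3 : lam * (1 - QA) = 0 := by rw [hkey, ← h]; ring
    have h4 : 0 < lam * (QA - 1) := mul_pos hlam (by rw [hQA1]; linarith)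
    nlinarith
  -- QA < 1
  have hQAlt : QA < 1 := by
    by_contra hcon
    push_neg at hcon
    have h5 : lam * (1 - QA) ≤ 0 :=
      mul_nonpos_iff.mpr (Or.inl ⟨le_of_lt hlam, by linarith⟩)
    linarith [mul_pos hPA1 hH0, hkey]
  refine ⟨A, hgA, hQAlt, ?_⟩
  intro i
  rw [← hPA_def, ← hQA_def]
  constructor
  · intro hiA
    have hgi := (hgA i).mp hiA
    have heq := (kkt i).2 hgi
    have hHlt : H (g ℓ i) < H 0 := hHanti 0 (g ℓ i) le_rfl hgi
    have hlt : π ℓ i * lam < p ℓ i * H 0 := by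
      calc π ℓ i * lam = p ℓ i * H (g ℓ i) := heq.symm
        _ < p ℓ i * H 0 := mul_lt_mul_of_pos_left hHlt (hp ℓ i)
    have h6 : π ℓ i * (lam * (1 - QA)) = π ℓ i * ((1 - PA) * H 0) := by rw [hkey]
    nlinarith [mul_lt_mul_of_pos_right hlt (by linarith : (0:ℝ) < 1 - QA), h6, hH0]
  · intro hlt
    by_contra hiA
    have hgi : g ℓ i = 0 := hgA0 i hiA
    have hle := (kkt i).1
    rw [hgi] at hle
    have h6 : π ℓ i * (lam * (1 - QA)) = π ℓ i * ((1 - PA) * H 0) := by rw [hkey]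
    nlinarith [mul_le_mul_of_nonneg_right hle (by linarith : (0:ℝ) ≤ 1 - QA), h6, hH0,
      hp ℓ i, hπ ℓ i]

lemma support_char_unique {ι : Type*} [Fintype ι] [DecidableEq ι] (p π : ι → ℝ)
    (hp : ∀ i, 0 < p i) (hπ : ∀ i, 0 < π i) (A B : Finset ι)
    (hA1 : ∑ i ∈ A, π i < 1) (hB1 : ∑ i ∈ B, π i < 1)
    (hA : ∀ i, i ∈ A ↔ (1 - ∑ j ∈ A, p j) * π i < (1 - ∑ j ∈ A, π j) * p i)
    (hB : ∀ i, i ∈ B ↔ (1 - ∑ j ∈ B, p j) * π i < (1 - ∑ j ∈ B, π j) * p i) :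
    A = B := by
  -- reformulate membership via the threshold θ = (1-P)/(1-Q) and ratio p i / π i
  have hmem : ∀ C : Finset ι, (∑ i ∈ C, π i < 1) →
      (∀ i, i ∈ C ↔ (1 - ∑ j ∈ C, p j) * π i < (1 - ∑ j ∈ C, π j) * p i) →
      ∀ i, i ∈ C ↔ (1 - ∑ j ∈ C, p j) / (1 - ∑ j ∈ C, π j) < p i / π i := by
    intro C hC1 hC i
    have hQ : 0 < 1 - ∑ j ∈ C, π j := by linarith
    rw [hC i, div_lt_div_iff₀ hQ (hπ i), mul_comm (p i)]
  have hA' := hmem A hA1 hA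
  have hB' := hmem B hB1 hB
  have key : ∀ (C D : Finset ι), (∑ i ∈ C, π i < 1) → (∑ i ∈ D, π i < 1) →
      (∀ i, i ∈ C ↔ (1 - ∑ j ∈ C, p j) / (1 - ∑ j ∈ C, π j) < p i / π i) →
      (∀ i, i ∈ D ↔ (1 - ∑ j ∈ D, p j) / (1 - ∑ j ∈ D, π j) < p i / π i) →
      D ⊆ C → C ≠ D → False := by
    intro C D hC1 hD1 hC hD hsub hne
    set PC := ∑ j ∈ C, p j with hPC
    set PD := ∑ j ∈ D, p j with hPD
    set QC := ∑ j ∈ C, π j with hQC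
    set QD := ∑ j ∈ D, π j with hQD
    have hQCpos : 0 < 1 - QC := by linarith
    have hQDpos : 0 < 1 - QD := by linarith
    set θC := (1 - PC) / (1 - QC) with hθC
    set θD := (1 - PD) / (1 - QD) with hθD
    have hθCeq : 1 - PC = θC * (1 - QC) := by rw [hθC, div_mul_cancel₀ _ (ne_of_gt hQCpos)]
    have hθDeq : 1 - PD = θD * (1 - QD) := by rw [hθD, div_mul_cancel₀ _ (ne_of_gt hQDpos)]
    obtain ⟨i, hiC, hiD⟩ : ∃ i, i ∈ C ∧ i ∉ D := by
      by_contra hcon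
      push_neg at hcon
      exact hne (Finset.Subset.antisymm (fun i hi => hcon i hi) hsub)
    have h1 : θC < p i / π i := (hC i).mp hiC
    have h2 : p i / π i ≤ θD := le_of_not_gt (fun h => hiD ((hD i).mpr h))
    have hθCD : θC < θD := lt_of_lt_of_le h1 h2
    have hsum : ∀ j ∈ C \ D, p j ≤ θD * π j := by
      intro j hj
      rw [Finset.mem_sdiff] at hj
      have h3 : p j / π j ≤ θD := le_of_not_gt (fun h => hj.2 ((hD j).mpr h))
      rw [div_le_iff₀ (hπ j)] at h3
      linarith [h3]
    have hsdp : ∑ j ∈ C \ D, p j = PC - PD := Finset.sum_sdiff_eq_sub hsub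
    have hsdq : ∑ j ∈ C \ D, π j = QC - QD := Finset.sum_sdiff_eq_sub hsub
    have hle : PC - PD ≤ θD * (QC - QD) := by
      rw [← hsdp, ← hsdq, Finset.mul_sum]
      exact Finset.sum_le_sum hsum
    nlinarith [mul_lt_mul_of_pos_right hθCD hQCpos]
  rcases eq_or_ne A B with h | h
  · exact h
  exfalso
  by_cases hAB : A \ B = ∅
  · rw [Finset.sdiff_eq_empty_iff_subset] at hAB
    exact key B A hB1 hA1 hB' hA' hAB (Ne.symm h)
  by_cases hBA : B \ A = ∅
  · rw [Finset.sdiff_eq_empty_iff_subset] at hBA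
    exact key A B hA1 hB1 hA' hB' hBA h
  obtain ⟨i, hi⟩ := Finset.nonempty_of_ne_empty hAB
  obtain ⟨j, hj⟩ := Finset.nonempty_of_ne_empty hBA
  rw [Finset.mem_sdiff] at hi hj
  have e1 := (hA' i).mp hi.1
  have e2 := le_of_not_gt (fun h => hi.2 ((hB' i).mpr h))
  have e3 := (hB' j).mp hj.1
  have e4 := le_of_not_gt (fun h => hj.2 ((hA' j).mpr h))
  exact absurd (lt_of_lt_of_le e1 e2) (not_lt.mpr (le_of_lt (lt_of_lt_of_le e3 e4)))

end Aux

/-- utility-invariance of the optimal support: under strict overround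
and pairwise-distinct edge ratios within each event, two optimal portfolios with
positive cash for two admissible utilities have the same active support. -/
theorem support_utility_invariant {m : ℕ} (n : Fin m → ℕ)
    (p π : ∀ ℓ, Fin (n ℓ) → ℝ) (hm : 1 ≤ m)
    (hp : ∀ ℓ i, 0 < p ℓ i) (hpsum : ∀ ℓ, ∑ i, p ℓ i = 1)
    (hπ : ∀ ℓ i, 0 < π ℓ i)
    (hover : ∀ ℓ, 1 < ∑ i, π ℓ i)
    (hdistinct : ∀ ℓ : Fin m, ∀ i j : Fin (n ℓ), i ≠ j →
      p ℓ i / π ℓ i ≠ p ℓ j / π ℓ j)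
    (U Uder V Vder : ℝ → ℝ)
    (hU : Admissible U Uder) (hV : Admissible V Vder)
    (c : ℝ) (g : ∀ ℓ, Fin (n ℓ) → ℝ)
    (hfeas : Feasible π c g) (hc : 0 < c)
    (hopt : ∀ c₁ : ℝ, ∀ g₁ : ∀ ℓ, Fin (n ℓ) → ℝ, Feasible π c₁ g₁ →
      ∑ x, prodProb p x * U (wealth c₁ g₁ x) ≤ ∑ x, prodProb p x * U (wealth c g x))
    (c' : ℝ) (g' : ∀ ℓ, Fin (n ℓ) → ℝ)
    (hfeas' : Feasible π c' g') (hc' : 0 < c')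
    (hopt' : ∀ c₁ : ℝ, ∀ g₁ : ∀ ℓ, Fin (n ℓ) → ℝ, Feasible π c₁ g₁ →
      ∑ x, prodProb p x * V (wealth c₁ g₁ x) ≤ ∑ x, prodProb p x * V (wealth c' g' x)) :
    ∀ ℓ : Fin m, ∀ i : Fin (n ℓ), 0 < g ℓ i ↔ 0 < g' ℓ i := by
  intro ℓ
  obtain ⟨A, hA1, hA2, hA3⟩ :=
    optimal_char p π hp hpsum hπ hover U Uder hU c g hfeas hc hopt ℓ
  obtain ⟨B, hB1, hB2, hB3⟩ :=
    optimal_char p π hp hpsum hπ hover V Vder hV c' g' hfeas' hc' hopt' ℓ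
  have hAB := support_char_unique (p ℓ) (π ℓ) (hp ℓ) (hπ ℓ) A B hA2 hB2 hA3 hB3
  intro i
  rw [← hA1, hAB, hB1]
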